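/- Let A be a monotone subset of an ordered topological vector space X and S a traded asset. Then Interior(A) ⊂ {X : ρ_{A,S}(X) < 0} ⊂ A ⊂ {X : ρ_{A,S}(X) ≤ 0} ⊂ closure(A), and {X : ρ_{A,S}(X) = 0} ⊂ ∂A. -/

import Mathlib

open Filter Topology

variable {X : Type*} [AddCommGroup X] [Module ℝ X] [PartialOrder X]
  [CovariantClass X X (· + ·) (· ≤ ·)] [PosSMulMono ℝ X]
  [TopologicalSpace X] [IsTopologicalAddGroup X] [ContinuousSMul ℝ X]

/-- The risk measure `ρ_{A,S}(x) = inf {m : x + (m/S₀)·S_T ∈ A}`, valued in `EReal`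
(with `inf ∅ = ⊤` and unbounded-below giving `⊥`). -/
noncomputable def rho (A : Set X) (S0 : ℝ) (ST : X) (x : X) : EReal :=
  sInf ((fun r : ℝ => (r : EReal)) '' {r : ℝ | x + (r / S0) • ST ∈ A})

/-- A set is monotone if it contains, with any element, every larger element. -/
def MonotoneSet (A : Set X) : Prop := ∀ x ∈ A, ∀ y, x ≤ y → y ∈ A

/-- An acceptance set: nonempty, proper, and monotone. -/
def AcceptanceSet (A : Set X) : Prop := A.Nonempty ∧ A ≠ Set.univ ∧ MonotoneSet A

/-- The algebraic core (algebraic interior) of a set. -/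
def algCore (A : Set X) : Set X :=
  {x | ∀ y : X, ∃ ε > 0, ∀ l : ℝ, |l| < ε → x + l • y ∈ A}

lemma rho_step (A : Set X) (hmono : MonotoneSet A) {S0 : ℝ} (hS0 : 0 < S0) {ST : X}
    (hST : 0 ≤ ST) {x : X} {r r' : ℝ} (h : x + (r / S0) • ST ∈ A) (hrr : r ≤ r') :
    x + (r' / S0) • ST ∈ A := by
  apply hmono _ h
  have h1 : (0:ℝ) ≤ (r' - r) / S0 := div_nonneg (by linarith) hS0.le
  have h2 : (0:X) ≤ ((r' - r) / S0) • ST := smul_nonneg h1 hST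
  have h3 : x + (r / S0) • ST + ((r' - r) / S0) • ST = x + (r' / S0) • ST := by
    rw [add_assoc, ← add_smul, ← add_div]
    ring_nf
  calc x + (r / S0) • ST = x + (r / S0) • ST + 0 := by rw [add_zero]
    _ ≤ x + (r / S0) • ST + ((r' - r) / S0) • ST := add_le_add_right h2 _
    _ = x + (r' / S0) • ST := h3

lemma rho_le (A : Set X) (S0 : ℝ) (ST : X) {x : X} {r : ℝ}
    (h : x + (r / S0) • ST ∈ A) : rho A S0 ST x ≤ (r : EReal) :=
  sInf_le ⟨r, h, rfl⟩

/-- chain of inclusions relating ρ_{A,S} to A, its interior, closure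
and boundary. -/
theorem rho_chain_of_inclusions (A : Set X) (S0 : ℝ) (ST : X)
    (hA : AcceptanceSet A) (hS0 : 0 < S0) (hST : 0 ≤ ST) (hSTne : ST ≠ 0) :
    interior A ⊆ {x : X | rho A S0 ST x < 0} ∧
    {x : X | rho A S0 ST x < 0} ⊆ A ∧
    A ⊆ {x : X | rho A S0 ST x ≤ 0} ∧
    {x : X | rho A S0 ST x ≤ 0} ⊆ closure A ∧
    {x : X | rho A S0 ST x = 0} ⊆ frontier A := by
  obtain ⟨-, -, hmono⟩ := hA
  -- interior ⊆ {rho < 0}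
  have h1 : interior A ⊆ {x : X | rho A S0 ST x < 0} := by
    intro x hx
    have hcont : Continuous fun r : ℝ => x + (r / S0) • ST := by fun_prop
    have hopen : IsOpen ((fun r : ℝ => x + (r / S0) • ST) ⁻¹' interior A) :=
      isOpen_interior.preimage hcont
    have h0 : (0:ℝ) ∈ (fun r : ℝ => x + (r / S0) • ST) ⁻¹' interior A := by
      simp [hx]
    obtain ⟨ε, hε, hball⟩ := Metric.isOpen_iff.mp hopen 0 h0
    have hmem : (-(ε/2)) ∈ Metric.ball (0:ℝ) ε := by
      simp [abs_of_nonneg, Real.dist_eq, abs_of_nonpos, hε.le]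
      linarith
    have : x + ((-(ε/2)) / S0) • ST ∈ A := interior_subset (hball hmem)
    have := rho_le A S0 ST this
    refine lt_of_le_of_lt this ?_
    exact_mod_cast (by linarith : -(ε/2) < (0:ℝ))
  have h2 : {x : X | rho A S0 ST x < 0} ⊆ A := by
    intro x hx
    rw [Set.mem_setOf_eq, rho] at hx
    obtain ⟨y, ⟨r, hr, rfl⟩, hy⟩ := sInf_lt_iff.mp hx
    have hy' : (r : EReal) < 0 := hy
    have hr0 : r ≤ 0 := le_of_lt (by exact_mod_cast hy')
    have := rho_step A hmono hS0 hST hr hr0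
    simpa using this
  have h3 : A ⊆ {x : X | rho A S0 ST x ≤ 0} := by
    intro x hx
    have : x + ((0:ℝ) / S0) • ST ∈ A := by simpa using hx
    simpa using rho_le A S0 ST this
  have h4 : {x : X | rho A S0 ST x ≤ 0} ⊆ closure A := by
    intro x hx
    have hcont : Continuous fun r : ℝ => x + (r / S0) • ST := by fun_prop
    have htend : Tendsto (fun r : ℝ => x + (r / S0) • ST) (𝓝[>] (0:ℝ)) (𝓝 x) := by
      have h := (hcont.tendsto 0).mono_left (nhdsWithin_le_nhds (s := Set.Ioi 0))
      simpa using h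
    refine mem_closure_of_tendsto htend ?_
    filter_upwards [self_mem_nhdsWithin] with ε (hε : 0 < ε)
    have hlt : rho A S0 ST x < (ε : EReal) :=
      lt_of_le_of_lt hx (by exact_mod_cast hε)
    rw [rho] at hlt
    obtain ⟨y, ⟨r, hr, rfl⟩, hy⟩ := sInf_lt_iff.mp hlt
    have hy' : (r : EReal) < (ε : EReal) := hy
    exact rho_step A hmono hS0 hST hr (le_of_lt (by exact_mod_cast hy'))
  refine ⟨h1, h2, h3, h4, ?_⟩
  intro x hx
  have hx' : rho A S0 ST x = 0 := hx
  constructor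
  · exact h4 (le_of_eq hx')
  · intro hint
    exact absurd hx' (ne_of_lt (h1 hint))
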